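/- Let $q$ be a prime power and $U$ a scheme over $\mathbb{F}_q$ which is isomorphic as a scheme to affine space $\mathbb{A}^n_{\mathbb{F}_q}$. Then $\#U(\mathbb{F}_q) = q^n$. -/

import Mathlib

open AlgebraicGeometry CategoryTheory

/-- `Spec.map` as an equivalence of hom sets. -/
noncomputable def specHomEquiv (R S : CommRingCat) : (R ⟶ S) ≃ (Spec S ⟶ Spec R) where
  toFun f := Spec.map f
  invFun g := (Spec.fullyFaithful.preimage g).unop
  left_inv f := congrArg Quiver.Hom.unop (Spec.fullyFaithful.preimage_map f.op)
  right_inv g := Spec.fullyFaithful.map_preimage g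

/-- if `U` is a scheme over `𝔽_q` isomorphic (over `𝔽_q`) to affine
`n`-space `𝔸ⁿ_{𝔽_q} = Spec 𝔽_q[x₁,…,xₙ]`, then `#U(𝔽_q) = qⁿ`. -/
theorem card_points_affine_space
    (q n : ℕ) (hq : IsPrimePow q)
    (F : Type) [Field F] [Fintype F] (hF : Fintype.card F = q)
    (U : Scheme) (p : U ⟶ Spec (CommRingCat.of F))
    (e : U ≅ Spec (CommRingCat.of (MvPolynomial (Fin n) F)))
    (he : e.hom ≫ Spec.map (CommRingCat.ofHom
        (algebraMap F (MvPolynomial (Fin n) F))) = p) :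
    Nat.card {g : Spec (CommRingCat.of F) ⟶ U // g ≫ p = 𝟙 _} = q ^ n := by
  classical
  subst he
  set R := MvPolynomial (Fin n) F with hR
  set ι : CommRingCat.of F ⟶ CommRingCat.of R :=
    CommRingCat.ofHom (algebraMap F R) with hι
  -- Step 1 : compose with the isomorphism `e`.
  let E1 : {g : Spec (CommRingCat.of F) ⟶ U // g ≫ (e.hom ≫ Spec.map ι) = 𝟙 _} ≃
      {h : Spec (CommRingCat.of F) ⟶ Spec (CommRingCat.of R) // h ≫ Spec.map ι = 𝟙 _} :=
    { toFun := fun g => ⟨g.1 ≫ e.hom, by rw [Category.assoc]; exact g.2⟩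
      invFun := fun h => ⟨h.1 ≫ e.inv, by
        simpa only [Category.assoc, Iso.inv_hom_id_assoc] using h.2⟩
      left_inv := fun g => Subtype.ext (by simp)
      right_inv := fun h => Subtype.ext (by simp) }
  -- Step 2 : Spec is fully faithful.
  let E2 : {h : Spec (CommRingCat.of F) ⟶ Spec (CommRingCat.of R) // h ≫ Spec.map ι = 𝟙 _} ≃
      {φ : CommRingCat.of R ⟶ CommRingCat.of F // ι ≫ φ = 𝟙 _} :=
    { toFun := fun h => ⟨(specHomEquiv _ _).symm h.1, by
        apply (specHomEquiv (CommRingCat.of F) (CommRingCat.of F)).injective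
        show Spec.map _ = Spec.map (𝟙 _)
        rw [Spec.map_comp, Spec.map_id]
        rw [show Spec.map ((specHomEquiv (CommRingCat.of R) (CommRingCat.of F)).symm h.1)
          = h.1 from (specHomEquiv _ _).apply_symm_apply h.1]
        exact h.2⟩
      invFun := fun φ => ⟨Spec.map φ.1, by
        rw [← Spec.map_comp, φ.2, Spec.map_id]⟩
      left_inv := fun h => Subtype.ext ((specHomEquiv _ _).apply_symm_apply h.1)
      right_inv := fun φ => Subtype.ext ((specHomEquiv _ _).symm_apply_apply φ.1) }
  -- Step 3 : ring homs commuting with `algebraMap` are algebra homs.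
  let E3 : {φ : CommRingCat.of R ⟶ CommRingCat.of F // ι ≫ φ = 𝟙 _} ≃ (R →ₐ[F] F) :=
    { toFun := fun φ => AlgHom.mk φ.1.hom (fun r =>
        RingHom.congr_fun (show RingHom.comp φ.1.hom (algebraMap F R)
          = RingHom.id F from congrArg CommRingCat.Hom.hom φ.2) r)
      invFun := fun ψ => ⟨CommRingCat.ofHom ψ.toRingHom, by
        apply CommRingCat.hom_ext
        show ψ.toRingHom.comp (algebraMap F R) = RingHom.id F
        ext r
        simp [ψ.commutes]⟩
      left_inv := fun φ => Subtype.ext rfl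
      right_inv := fun ψ => AlgHom.ext fun x => rfl }
  -- Step 4 : algebra homs out of a polynomial ring are points.
  let E4 : (R →ₐ[F] F) ≃ (Fin n → F) :=
    { toFun := fun ψ i => ψ (MvPolynomial.X i)
      invFun := fun v => MvPolynomial.aeval v
      left_inv := fun ψ => (MvPolynomial.aeval_unique ψ).symm
      right_inv := fun v => funext fun i => MvPolynomial.aeval_X v i }
  rw [Nat.card_congr (((E1.trans E2).trans E3).trans E4)]
  simp [Nat.card_eq_fintype_card, hF]
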